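/- Let n be a positive integer, let b_l, b_r ∈ ℤ/n be such that b_r − b_l is a unit of ℤ/n, and let C be a subset of ℤ/n with b_l ∈ C and b_r ∈ C that is closed under both reflections x ↦ 2·b_l − x and x ↦ 2·b_r − x. Then C is all of ℤ/n. -/
import Mathlib


/-- Let `n` be a positive integer, `b_l, b_r ∈ ℤ/n` with `b_r - b_l` a unit, and let
`C ⊆ ℤ/n` contain `b_l` and `b_r` and be closed under the reflections
`x ↦ 2·b_l - x` and `x ↦ 2·b_r - x`. Then `C = ℤ/n`. -/
theorem statement_1 (n : ℕ) (hn : 0 < n) (bl br : ZMod n) (hu : IsUnit (br - bl))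
    (C : Set (ZMod n)) (hbl : bl ∈ C) (hbr : br ∈ C)
    (hl : ∀ x ∈ C, 2 * bl - x ∈ C) (hr : ∀ x ∈ C, 2 * br - x ∈ C) :
    C = Set.univ := by
  haveI : NeZero n := ⟨hn.ne'⟩
  set d := br - bl with hd
  have key : ∀ m : ℕ, bl + (m : ZMod n) * d ∈ C := by
    intro m
    induction m using Nat.twoStepInduction with
    | zero => simpa using hbl
    | one => push_cast; rw [one_mul, hd]; simpa using hbr
    | more m ih _ =>
      have h1 := hl _ ih
      have h2 := hr _ h1
      have : 2 * br - (2 * bl - (bl + (m : ZMod n) * d)) = bl + ((m + 2 : ℕ) : ZMod n) * d := by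
        push_cast; rw [hd]; ring
      rwa [this] at h2
  ext x
  simp only [Set.mem_univ, iff_true]
  obtain ⟨u, hu'⟩ := hu
  set k := u⁻¹ * (x - bl) with hk
  have h := key ((k : ZMod n)).val
  rw [ZMod.natCast_val, ZMod.cast_id] at h
  have : bl + (k : ZMod n) * d = x := by
    rw [hk, ← hu', mul_right_comm, Units.inv_mul, one_mul, add_sub_cancel]
  rwa [this] at h
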